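/- arXiv:1401.0138 — 4 statements merged into one kernel-verified Lean document; each statement's English description precedes it below -/
import Mathlib

section
/- For any graph G with n vertices and e edges, the number of subgraphs of G isomorphic to a path with two edges (i.e., the number of paths on three vertices) is at least (2e/n)(e - n/2). -/
/-- The number of subgraphs of `G` isomorphic to a path on three vertices:
pairs of distinct edges of `G` sharing a vertex. -/
noncomputable def pathP2Count {V : Type*} [Fintype V] [DecidableEq V]
    (G : SimpleGraph V) [DecidableRel G.Adj] : ℕ :=
  ((G.edgeFinset.powersetCard 2).filter (fun s => ∃ v : V, ∀ e ∈ s, v ∈ e)).card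

lemma pathP2Count_eq {V : Type*} [Fintype V] [DecidableEq V]
    (G : SimpleGraph V) [DecidableRel G.Adj] :
    pathP2Count G = ∑ v : V, (G.degree v).choose 2 := by
  classical
  have hset : ((G.edgeFinset.powersetCard 2).filter (fun s => ∃ v : V, ∀ e ∈ s, v ∈ e))
      = Finset.univ.biUnion (fun v => (G.incidenceFinset v).powersetCard 2) := by
    ext s
    simp only [Finset.mem_filter, Finset.mem_powersetCard, Finset.mem_biUnion,
      Finset.mem_univ, true_and]
    constructor
    · rintro ⟨⟨hsub, hcard⟩, v, hv⟩
      exact ⟨v, fun e he => by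
        exact (SimpleGraph.mem_incidenceFinset _ _ _).mpr ⟨SimpleGraph.mem_edgeFinset.mp (hsub he), hv e he⟩, hcard⟩
    · rintro ⟨v, hsub, hcard⟩
      refine ⟨⟨fun e he => ?_, hcard⟩, v, fun e he => ?_⟩
      · exact SimpleGraph.mem_edgeFinset.mpr ((SimpleGraph.mem_incidenceFinset _ _ _).mp (hsub he)).1
      · exact ((SimpleGraph.mem_incidenceFinset _ _ _).mp (hsub he)).2
  rw [pathP2Count, hset, Finset.card_biUnion]
  · refine Finset.sum_congr rfl fun v _ => ?_
    rw [Finset.card_powersetCard, SimpleGraph.card_incidenceFinset_eq_degree]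
  · intro u _ v _ huv
    simp only [Function.onFun]; rw [Finset.disjoint_left]
    intro s hsu hsv
    rw [Finset.mem_powersetCard] at hsu hsv
    have hsub : s ⊆ {s(u, v)} := by
      intro e he
      have : e ∈ G.incidenceSet u ∩ G.incidenceSet v := by
        constructor
        · exact (SimpleGraph.mem_incidenceFinset _ _ _).mp (hsu.1 he)
        · exact (SimpleGraph.mem_incidenceFinset _ _ _).mp (hsv.1 he)
      have := G.incidenceSet_inter_incidenceSet_subset huv this
      simpa using this
    have := Finset.card_le_card hsub
    simp [hsu.2] at this

/-- A graph with `n ≥ 1` vertices and `e` edges has at least `(2e/n)(e - n/2)`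
subgraphs isomorphic to the path with two edges. -/
theorem path_count_lower_bound {V : Type*} [Fintype V] [DecidableEq V]
    (G : SimpleGraph V) [DecidableRel G.Adj] (hn : 1 ≤ Fintype.card V) :
    (2 * (G.edgeFinset.card : ℝ) / (Fintype.card V : ℝ)) *
      ((G.edgeFinset.card : ℝ) - (Fintype.card V : ℝ) / 2) ≤ (pathP2Count G : ℝ) := by
  classical
  set n : ℝ := (Fintype.card V : ℝ) with hn'
  have hnpos : (0 : ℝ) < n := by rw [hn']; exact_mod_cast Nat.lt_of_lt_of_le Nat.zero_lt_one hn
  have hsum : ∑ v : V, (G.degree v : ℝ) = 2 * G.edgeFinset.card := by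
    exact_mod_cast G.sum_degrees_eq_twice_card_edges
  have hchoose : ∀ v : V, ((G.degree v).choose 2 : ℝ)
      = (G.degree v : ℝ) * ((G.degree v : ℝ) - 1) / 2 := by
    intro v
    rw [Nat.choose_two_right]
    rcases Nat.eq_zero_or_pos (G.degree v) with h | h
    · simp [h]
    · have : (G.degree v * (G.degree v - 1) / 2 : ℕ) = G.degree v * (G.degree v - 1) / 2 := rfl
      rw [Nat.cast_div]
      · push_cast [Nat.cast_sub h]
        ring_nf
      · exact Nat.even_mul_pred_self _ |>.two_dvd
      · norm_num
  have hcount : (pathP2Count G : ℝ) = ∑ v : V, ((G.degree v : ℝ)^2 - G.degree v) / 2 := by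
    rw [pathP2Count_eq]
    push_cast
    refine Finset.sum_congr rfl fun v _ => ?_
    rw [hchoose v]; ring
  have hCS : (∑ v : V, (G.degree v : ℝ))^2 ≤ n * ∑ v : V, (G.degree v : ℝ)^2 := by
    have := sq_sum_le_card_mul_sum_sq (s := (Finset.univ : Finset V))
      (f := fun v => (G.degree v : ℝ))
    simpa [hn'] using this
  have h1 : ∑ v : V, ((G.degree v : ℝ)^2 - G.degree v) / 2
      = ((∑ v : V, (G.degree v : ℝ)^2) - ∑ v : V, (G.degree v : ℝ)) / 2 := by
    rw [← Finset.sum_div, Finset.sum_sub_distrib]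
  rw [hcount, h1, hsum, div_mul_eq_mul_div, div_le_div_iff₀ hnpos two_pos]
  nlinarith [hCS, hsum, hnpos]
end

section
/- For any finite graph G, χ(G) = min{β(H) : H is a hypergraph with KG(H) ≅ G}, where the minimum is over all hypergraphs H whose Kneser graph is isomorphic to G. -/
/-- The Kneser graph of a hypergraph given by its finset of hyperedges:
vertices are the hyperedges, adjacent iff disjoint. -/
def kneserGraph {V : Type*} [DecidableEq V] (E : Finset (Finset V)) :
    SimpleGraph {e // e ∈ E} where
  Adj a b := a ≠ b ∧ Disjoint (a : Finset V) (b : Finset V)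
  symm := ⟨fun _ _ h => ⟨h.1.symm, h.2.symm⟩⟩
  loopless := ⟨fun _ h => h.1 rfl⟩

section Aux

variable {V : Type*} [DecidableEq V] {n : ℕ} [Fintype V]
  (G : SimpleGraph V) [DecidableRel G.Adj]

/-- The base hyperedge associated to a vertex `v` for a coloring `c`. -/
def kbase (c : V → Fin n) (v : V) : Finset ((Fin n) ⊕ (Finset V)) :=
  insert (Sum.inl (c v))
    ((Finset.univ.filter (fun w => ¬ G.Adj v w)).image
      (fun w => Sum.inr ({v, w} : Finset V)))

lemma mem_kbase {c : V → Fin n} {v : V} {x : (Fin n) ⊕ (Finset V)} :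
    x ∈ kbase G c v ↔
      x = Sum.inl (c v) ∨ ∃ w, ¬ G.Adj v w ∧ x = Sum.inr ({v, w} : Finset V) := by
  simp only [kbase, Finset.mem_insert, Finset.mem_image, Finset.mem_filter,
    Finset.mem_univ, true_and]
  constructor
  · rintro (h | ⟨w, hw, rfl⟩)
    · exact Or.inl h
    · exact Or.inr ⟨w, hw, rfl⟩
  · rintro (h | ⟨w, hw, rfl⟩)
    · exact Or.inl h
    · exact Or.inr ⟨w, hw, rfl⟩

lemma inr_singleton_mem_kbase (c : V → Fin n) (v : V) :
    Sum.inr ({v} : Finset V) ∈ kbase G c v := by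
  rw [mem_kbase]
  exact Or.inr ⟨v, G.loopless.irrefl v, by simp⟩

lemma kbase_injective (c : V → Fin n) : Function.Injective (kbase G c) := by
  intro u v h
  have hu : Sum.inr ({u} : Finset V) ∈ kbase G c v := by
    rw [← h]; exact inr_singleton_mem_kbase G c u
  rw [mem_kbase] at hu
  rcases hu with h' | ⟨w, _, h'⟩
  · exact absurd h' (by simp)
  · have : v ∈ ({u} : Finset V) := by
      have := Sum.inr.inj h'
      rw [this]; exact Finset.mem_insert_self v _
    exact (Finset.mem_singleton.mp this).symm

lemma disjoint_kbase {c : V → Fin n} (hc : ∀ {u v}, G.Adj u v → c u ≠ c v)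
    {u v : V} : Disjoint (kbase G c u) (kbase G c v) ↔ G.Adj u v := by
  constructor
  · intro hd
    by_contra hna
    have h1 : Sum.inr ({u, v} : Finset V) ∈ kbase G c u := by
      rw [mem_kbase]; exact Or.inr ⟨v, hna, rfl⟩
    have h2 : Sum.inr ({u, v} : Finset V) ∈ kbase G c v := by
      rw [mem_kbase]
      exact Or.inr ⟨u, fun h => hna h.symm, by rw [Finset.pair_comm]⟩
    exact Finset.disjoint_left.mp hd h1 h2
  · intro ha
    rw [Finset.disjoint_left]
    intro x hx hx'
    rw [mem_kbase] at hx hx'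
    rcases hx with h1 | ⟨w, hw, h1⟩ <;> rcases hx' with h2 | ⟨w', hw', h2⟩
    · exact hc ha (Sum.inl.inj (h1 ▸ h2))
    · exact absurd (h1 ▸ h2) (by simp)
    · exact absurd (h2 ▸ h1) (by simp)
    · have hpair : ({u, w} : Finset V) = {v, w'} := Sum.inr.inj (h1 ▸ h2)
      have hv : v ∈ ({u, w} : Finset V) := by
        rw [hpair]; exact Finset.mem_insert_self v _
      rcases Finset.mem_insert.mp hv with h | h
      · exact ha.ne' h
      · exact hw (Finset.mem_singleton.mp h ▸ ha)

end Aux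

/-- χ(G) equals the minimum covering number β(H) over all hypergraphs H
whose Kneser graph is isomorphic to G. -/
theorem chromatic_eq_min_cover {V : Type*} [Fintype V] (G : SimpleGraph V) :
    G.chromaticNumber =
      (sInf {b : ℕ | ∃ (m : ℕ) (E : Finset (Finset (Fin m))),
        (∀ e ∈ E, e.Nonempty) ∧ Nonempty (kneserGraph E ≃g G) ∧
        b = sInf {k : ℕ | ∃ S : Finset (Fin m),
          (∀ e ∈ E, ∃ v ∈ S, v ∈ e) ∧ S.card = k}} : ℕ) := by
  classical
  set K0 := {b : ℕ | ∃ (m : ℕ) (E : Finset (Finset (Fin m))),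
        (∀ e ∈ E, e.Nonempty) ∧ Nonempty (kneserGraph E ≃g G) ∧
        b = sInf {k : ℕ | ∃ S : Finset (Fin m),
          (∀ e ∈ E, ∃ v ∈ S, v ∈ e) ∧ S.card = k}} with hK0
  -- χ(G) is finite
  have hχtop : G.chromaticNumber ≠ ⊤ :=
    (lt_of_le_of_lt G.colorable_of_fintype.chromaticNumber_le
      (WithTop.coe_lt_top _)).ne
  set n := G.chromaticNumber.toNat with hn_def
  have hn : (n : ℕ∞) = G.chromaticNumber := ENat.coe_toNat hχtop
  have hcol : G.Colorable n := SimpleGraph.chromaticNumber_le_iff_colorable.mp hn.ge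
  -- Direction A: χ(G) ≤ b for any b ∈ K0
  have hA : ∀ b ∈ K0, G.chromaticNumber ≤ (b : ℕ∞) := by
    rintro b ⟨m, E, hne, ⟨iso⟩, rfl⟩
    set K := {k : ℕ | ∃ S : Finset (Fin m),
          (∀ e ∈ E, ∃ v ∈ S, v ∈ e) ∧ S.card = k} with hK
    have hKne : K.Nonempty := by
      refine ⟨Finset.univ.card, Finset.univ, fun e he => ?_, rfl⟩
      obtain ⟨v, hv⟩ := hne e he
      exact ⟨v, Finset.mem_univ v, hv⟩
    obtain ⟨S, hS, hcard⟩ := Nat.sInf_mem hKne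
    -- build a coloring of G with colors in S
    have hpick : ∀ v : V, ∃ x, x ∈ S ∧ x ∈ ((iso.symm v : {e // e ∈ E}) : Finset (Fin m)) :=
      fun v => by
        obtain ⟨x, hx1, hx2⟩ := hS _ (iso.symm v).2
        exact ⟨x, hx1, hx2⟩
    let C : G.Coloring {x // x ∈ S} :=
      SimpleGraph.Coloring.mk
        (fun v => ⟨(hpick v).choose, (hpick v).choose_spec.1⟩)
        (by
          intro u v huv heq
          have hadj : (kneserGraph E).Adj (iso.symm u) (iso.symm v) :=
            iso.symm.map_adj_iff.mpr huv
          have h1 : (hpick u).choose ∈ ((iso.symm u : {e // e ∈ E}) : Finset (Fin m)) :=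
            (hpick u).choose_spec.2
          have h2 : (hpick v).choose ∈ ((iso.symm v : {e // e ∈ E}) : Finset (Fin m)) :=
            (hpick v).choose_spec.2
          have heq' : (hpick u).choose = (hpick v).choose := congrArg Subtype.val heq
          exact Finset.disjoint_left.mp hadj.2 h1 (heq' ▸ h2))
    have hcolS : G.Colorable S.card := by
      simpa [Fintype.card_coe] using C.colorable
    rw [← hcard]
    exact hcolS.chromaticNumber_le
  -- Direction B: construct a representation with β ≤ n
  obtain ⟨c⟩ := hcol
  have hcval : ∀ {u v}, G.Adj u v → c u ≠ c v := fun h => c.valid h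
  letI : DecidableRel G.Adj := Classical.decRel _
  set m := Fintype.card ((Fin n) ⊕ (Finset V)) with hm
  let g : ((Fin n) ⊕ (Finset V)) ≃ Fin m := Fintype.equivFin _
  let edge : V → Finset (Fin m) := fun v => (kbase G (⇑c) v).image g
  set E : Finset (Finset (Fin m)) := Finset.univ.image edge with hE
  have hedge_inj : Function.Injective edge :=
    (Finset.image_injective g.injective).comp (kbase_injective G _)
  have hdisj : ∀ u v : V, Disjoint (edge u) (edge v) ↔ G.Adj u v := by
    intro u v
    rw [show edge u = (kbase G (⇑c) u).image g from rfl,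
      show edge v = (kbase G (⇑c) v).image g from rfl,
      Finset.disjoint_image g.injective]
    exact disjoint_kbase G hcval
  have hne : ∀ e ∈ E, e.Nonempty := by
    intro e he
    obtain ⟨v, _, rfl⟩ := Finset.mem_image.mp he
    exact ⟨g (Sum.inr {v}), Finset.mem_image_of_mem g (inr_singleton_mem_kbase G _ v)⟩
  let f : V → {e // e ∈ E} := fun v => ⟨edge v, Finset.mem_image_of_mem edge (Finset.mem_univ v)⟩
  have hfbij : Function.Bijective f := by
    constructor
    · intro u v h
      exact hedge_inj (congrArg Subtype.val h)
    · rintro ⟨e, he⟩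
      obtain ⟨v, _, rfl⟩ := Finset.mem_image.mp he
      exact ⟨v, rfl⟩
  let iso' : G ≃g kneserGraph E :=
    { toEquiv := Equiv.ofBijective f hfbij
      map_rel_iff' := by
        intro a b
        show ((f a : {e // e ∈ E}) ≠ f b ∧ Disjoint (edge a) (edge b)) ↔ G.Adj a b
        constructor
        · rintro ⟨_, hd⟩
          exact (hdisj a b).mp hd
        · intro ha
          refine ⟨fun h => ha.ne (hedge_inj (congrArg Subtype.val h)), (hdisj a b).mpr ha⟩ }
  -- the covering set
  let S : Finset (Fin m) := Finset.univ.image (fun i : Fin n => g (Sum.inl i))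
  have hScover : ∀ e ∈ E, ∃ v ∈ S, v ∈ e := by
    intro e he
    obtain ⟨v, _, rfl⟩ := Finset.mem_image.mp he
    refine ⟨g (Sum.inl (c v)), Finset.mem_image_of_mem _ (Finset.mem_univ _), ?_⟩
    exact Finset.mem_image_of_mem g (Finset.mem_insert_self _ _)
  have hScard : S.card ≤ n := le_trans Finset.card_image_le (by simp)
  set b := sInf {k : ℕ | ∃ S : Finset (Fin m),
          (∀ e ∈ E, ∃ v ∈ S, v ∈ e) ∧ S.card = k} with hb
  have hbK0 : b ∈ K0 := ⟨m, E, hne, ⟨iso'.symm⟩, rfl⟩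
  have hbn : b ≤ n := le_trans (Nat.sInf_le ⟨S, hScover, rfl⟩) hScard
  -- conclude
  apply le_antisymm
  · exact hA _ (Nat.sInf_mem ⟨b, hbK0⟩)
  · calc ((sInf K0 : ℕ) : ℕ∞) ≤ (b : ℕ∞) := by exact_mod_cast Nat.sInf_le hbK0
      _ ≤ (n : ℕ∞) := by exact_mod_cast hbn
      _ = G.chromaticNumber := hn
end

section
/- For any finite hypergraph H and family F of hypergraphs, the alternating Turán number satisfies ex(H, F) ≤ ex_alt(H, F) ≤ 2·ex(H, F). -/
/-- The finset `T` of hyperedges forms (together with a suitable finite vertex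
set `U`) a subhypergraph isomorphic to the member `F i` of the family `F`. -/
def IsHypCopy {V : Type*} [DecidableEq V] {ι : Type*} {β : ι → Type*}
    [∀ i, Fintype (β i)] [∀ i, DecidableEq (β i)]
    (F : ∀ i, Finset (Finset (β i))) (T : Finset (Finset V)) : Prop :=
  ∃ (i : ι) (U : Finset V) (g : V → β i),
    (∀ t ∈ T, t ⊆ U) ∧ Set.BijOn g ↑U Set.univ ∧
    T.image (Finset.image g) = F i

/-- A set of hyperedges is F-free if it contains no copy of a member of F. -/
def HypFFree {V : Type*} [DecidableEq V] {ι : Type*} {β : ι → Type*}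
    [∀ i, Fintype (β i)] [∀ i, DecidableEq (β i)]
    (F : ∀ i, Finset (Finset (β i))) (A : Finset (Finset V)) : Prop :=
  ∀ T ⊆ A, ¬ IsHypCopy F T

/-- The entries of `L` at even positions. -/
def evenEntries {α : Type*} (L : List α) : List α :=
  (L.zipIdx.filter (fun p => p.2 % 2 = 0)).map Prod.fst

/-- The entries of `L` at odd positions. -/
def oddEntries {α : Type*} (L : List α) : List α :=
  (L.zipIdx.filter (fun p => p.2 % 2 = 1)).map Prod.fst

lemma evenEntries_sublist {α : Type*} (L : List α) : List.Sublist (evenEntries L) L := by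
  have h := ((L.zipIdx.filter_sublist (p := fun p => p.2 % 2 = 0))).map Prod.fst
  simpa [List.zipIdx_map_fst, evenEntries] using h

lemma oddEntries_sublist {α : Type*} (L : List α) : List.Sublist (oddEntries L) L := by
  have h := ((L.zipIdx.filter_sublist (p := fun p => p.2 % 2 = 1))).map Prod.fst
  simpa [List.zipIdx_map_fst, oddEntries] using h

lemma evenOdd_length {α : Type*} (L : List α) :
    (evenEntries L).length + (oddEntries L).length = L.length := by
  have h : L.zipIdx.filter (fun p => decide (p.2 % 2 = 1)) =
      L.zipIdx.filter (fun p => !decide (p.2 % 2 = 0)) := by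
    apply List.filter_congr
    intro p _
    rcases Nat.mod_two_eq_zero_or_one p.2 with h | h <;> simp [h]
  simp only [evenEntries, oddEntries, List.length_map, h]
  rw [← List.countP_eq_length_filter, ← List.countP_eq_length_filter]
  have h2 := List.length_eq_countP_add_countP (l := L.zipIdx) (p := fun p => decide (p.2 % 2 = 0))
  simp only [decide_not, Bool.decide_coe] at h2
  rw [List.length_zipIdx] at h2
  omega

lemma hypFFree_mono {V : Type*} [DecidableEq V] {ι : Type*} {β : ι → Type*}
    [∀ i, Fintype (β i)] [∀ i, DecidableEq (β i)]
    {F : ∀ i, Finset (Finset (β i))} {A B : Finset (Finset V)}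
    (h : HypFFree F A) (hBA : B ⊆ A) : HypFFree F B :=
  fun T hT => h T (hT.trans hBA)

/-- ex(H,F) ≤ ex_alt(H,F) ≤ 2·ex(H,F).  An alternating 2-coloring of length l
w.r.t. an ordering σ is encoded by a σ-increasing list `L` of hyperedges of
length l; its red and blue classes are the entries at even and odd positions. -/
theorem ex_le_ex_alt_le_two_ex {V : Type*} [DecidableEq V] {ι : Type*} {β : ι → Type*}
    [∀ i, Fintype (β i)] [∀ i, DecidableEq (β i)]
    (E : Finset (Finset V)) (F : ∀ i, Finset (Finset (β i))) (x y : ℕ)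
    (hx : IsGreatest {k : ℕ | ∃ A ⊆ E, HypFFree F A ∧ A.card = k} x)
    (hy : IsLeast {m : ℕ | ∃ σ : {e // e ∈ E} ≃ Fin E.card,
      IsGreatest {l : ℕ | ∃ L : List {e // e ∈ E},
        L.Chain' (fun a b => σ a < σ b) ∧ L.length = l ∧
        HypFFree F ((evenEntries L).map Subtype.val).toFinset ∧
        HypFFree F ((oddEntries L).map Subtype.val).toFinset} m} y) :
    x ≤ y ∧ y ≤ 2 * x := by
  obtain ⟨σ, ⟨⟨L, hchain, hlen, heven, hodd⟩, hub⟩⟩ := hy.1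
  constructor
  · -- x ≤ y : exhibit a list of length x for this σ
    obtain ⟨A, hAE, hAfree, hAcard⟩ := hx.1
    set B : Finset {e // e ∈ E} :=
      A.attach.map ⟨fun a => ⟨a.1, hAE a.2⟩, by
        intro a b h; exact Subtype.ext (congrArg (fun z : {e // e ∈ E} => z.1) h)⟩ with hB
    have hBmem : ∀ v ∈ B, v.1 ∈ A := by
      intro v hv
      simp only [hB, Finset.mem_map, Finset.mem_attach, Function.Embedding.coeFn_mk,
        true_and] at hv
      obtain ⟨a, ha⟩ := hv
      rw [← ha]
      exact a.2
    have hBcard : B.card = x := by simp [hB, hAcard]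
    set L0 : List (Fin E.card) := (B.image σ).sort (· ≤ ·) with hL0
    refine hub ⟨L0.map σ.symm, ?_, ?_, ?_, ?_⟩
    · show List.IsChain _ _
      rw [List.isChain_map]
      have := (B.image σ).sortedLT_sort.pairwise
      exact List.Pairwise.isChain (this.imp (by simp))
    · rw [List.length_map, hL0, Finset.length_sort,
        Finset.card_image_of_injective _ σ.injective, hBcard]
    · apply hypFFree_mono hAfree
      intro e he
      simp only [List.mem_toFinset, List.mem_map] at he
      obtain ⟨v, hv, rfl⟩ := he
      have hvL := (evenEntries_sublist _).mem hv
      simp only [List.mem_map] at hvL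
      obtain ⟨s, hs, rfl⟩ := hvL
      rw [Finset.mem_sort, Finset.mem_image] at hs
      obtain ⟨b, hb, rfl⟩ := hs
      rw [Equiv.symm_apply_apply]
      exact hBmem b hb
    · apply hypFFree_mono hAfree
      intro e he
      simp only [List.mem_toFinset, List.mem_map] at he
      obtain ⟨v, hv, rfl⟩ := he
      have hvL := (oddEntries_sublist _).mem hv
      simp only [List.mem_map] at hvL
      obtain ⟨s, hs, rfl⟩ := hvL
      rw [Finset.mem_sort, Finset.mem_image] at hs
      obtain ⟨b, hb, rfl⟩ := hs
      rw [Equiv.symm_apply_apply]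
      exact hBmem b hb
  · -- y ≤ 2 * x
    have hnodup : L.Nodup := by
      haveI : IsTrans {e // e ∈ E} (fun a b => σ a < σ b) :=
        ⟨fun _ _ _ h1 h2 => lt_trans h1 h2⟩
      have hpw := (List.isChain_iff_pairwise).1 hchain
      exact hpw.imp (fun {a b} h => by rintro rfl; exact lt_irrefl _ h)
    have key : ∀ (M : List {e // e ∈ E}), List.Sublist M L →
        HypFFree F (M.map Subtype.val).toFinset → M.length ≤ x := by
      intro M hM hfree
      have hnd : (M.map Subtype.val).Nodup :=
        (hM.nodup hnodup).map Subtype.val_injective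
      have hcard : (M.map Subtype.val).toFinset.card = M.length := by
        rw [List.toFinset_card_of_nodup hnd, List.length_map]
      refine hx.2 ⟨(M.map Subtype.val).toFinset, ?_, hfree, hcard⟩
      intro e he
      simp only [List.mem_toFinset, List.mem_map] at he
      obtain ⟨v, _, rfl⟩ := he
      exact v.2
    have h1 := key _ (evenEntries_sublist L) heven
    have h2 := key _ (oddEntries_sublist L) hodd
    have := evenOdd_length L
    omega
end

section
/- Let G be a graph with n vertices possessing a spanning subgraph whose connected components H₁, …, H_{p+1} satisfy: H₁, …, H_{p−1} are triangles and H_p, H_{p+1} ∈ {K₂, K₃}. Then χ(KG(G, P₂)) = |E(G)| − ⌊2n/3⌋. -/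
/-- `s` is (the edge set of) a path with two edges in `G`: two distinct edges
of `G` sharing a vertex. -/
def IsP2 {V : Type*} (G : SimpleGraph V) (s : Finset (Sym2 V)) : Prop :=
  ↑s ⊆ G.edgeSet ∧ s.card = 2 ∧ ∃ v : V, ∀ e ∈ s, v ∈ e

/-- The path graph KG(G, P₂): vertices are the 2-edge paths of `G`,
adjacent iff edge-disjoint. -/
def pathKneser {V : Type*} (G : SimpleGraph V) :
    SimpleGraph {s : Finset (Sym2 V) // IsP2 G s} where
  Adj a b := a ≠ b ∧ Disjoint (a : Finset (Sym2 V)) (b : Finset (Sym2 V))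
  symm := ⟨fun _ _ h => ⟨h.1.symm, h.2.symm⟩⟩
  loopless := ⟨fun _ h => h.1 rfl⟩

section Helpers
open Finset

lemma card_le_three_of_no_common {α : Type*} [DecidableEq α] (F : Finset (Finset α))
    (h2 : ∀ s ∈ F, s.card = 2) (hint : ∀ s ∈ F, ∀ u ∈ F, ¬ Disjoint s u)
    (hc : ¬ ∃ e, ∀ s ∈ F, e ∈ s) : F.card ≤ 3 := by
  push_neg at hc
  rcases F.eq_empty_or_nonempty with rfl | ⟨s₁, hs₁⟩
  · simp
  obtain ⟨e, f, hef, rfl⟩ := Finset.card_eq_two.mp (h2 s₁ hs₁)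
  obtain ⟨s₂, hs₂, he2⟩ := hc e
  have hf2 : f ∈ s₂ := by
    obtain ⟨a, ha2, ha1⟩ := Finset.not_disjoint_iff.mp (hint s₂ hs₂ _ hs₁)
    rcases Finset.mem_insert.mp ha1 with rfl | h
    · exact absurd ha2 he2
    · rwa [Finset.mem_singleton.mp h] at ha2
  obtain ⟨g, hg⟩ := Finset.card_eq_one.mp
    (by rw [Finset.card_erase_of_mem hf2, h2 s₂ hs₂])
  have hgs₂ : g ∈ s₂.erase f := by rw [hg]; exact Finset.mem_singleton_self g
  have hgf : g ≠ f := Finset.ne_of_mem_erase hgs₂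
  have hg2 : g ∈ s₂ := Finset.mem_of_mem_erase hgs₂
  have hge : g ≠ e := by rintro rfl; exact he2 hg2
  have hs₂eq : s₂ = {f, g} := by
    have h' : insert f (s₂.erase f) = s₂ := Finset.insert_erase hf2
    rw [← h', hg]
  obtain ⟨s₃, hs₃, hf3⟩ := hc f
  have he3 : e ∈ s₃ := by
    obtain ⟨a, ha3, ha1⟩ := Finset.not_disjoint_iff.mp (hint s₃ hs₃ _ hs₁)
    rcases Finset.mem_insert.mp ha1 with rfl | h
    · exact ha3
    · exact absurd ha3 (by rw [Finset.mem_singleton.mp h]; exact hf3)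
  have hg3 : g ∈ s₃ := by
    obtain ⟨a, ha3, ha2⟩ := Finset.not_disjoint_iff.mp (hint s₃ hs₃ _ hs₂)
    rw [hs₂eq] at ha2
    rcases Finset.mem_insert.mp ha2 with rfl | h
    · exact absurd ha3 hf3
    · rwa [Finset.mem_singleton.mp h] at ha3
  have hs₃eq : s₃ = {e, g} := by
    symm
    apply Finset.eq_of_subset_of_card_le
    · intro a ha
      rcases Finset.mem_insert.mp ha with rfl | h
      · exact he3
      · rw [Finset.mem_singleton.mp h]; exact hg3
    · rw [h2 s₃ hs₃, Finset.card_insert_of_notMem (by simp [Ne.symm hge]), Finset.card_singleton]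
  have key : ∀ s ∈ F, s ⊆ ({e, f, g} : Finset α) := by
    intro s hs x hx
    by_contra hx'
    simp only [Finset.mem_insert, Finset.mem_singleton, not_or] at hx'
    obtain ⟨hxe, hxf, hxg⟩ := hx'
    obtain ⟨y, hy⟩ := Finset.card_eq_one.mp
      (by rw [Finset.card_erase_of_mem hx, h2 s hs])
    have hseq : s = {x, y} := by
      have h' : insert x (s.erase x) = s := Finset.insert_erase hx
      rw [← h', hy]
    have hmem : ∀ u ∈ F, ∃ a ∈ s, a ∈ u := by
      intro u hu
      obtain ⟨a, ha, ha'⟩ := Finset.not_disjoint_iff.mp (hint s hs u hu)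
      exact ⟨a, ha, ha'⟩
    have hy1 : y ∈ ({e, f} : Finset α) := by
      obtain ⟨a, ha, ha'⟩ := hmem _ hs₁
      rw [hseq] at ha
      rcases Finset.mem_insert.mp ha with rfl | h
      · exact absurd ha' (by simp [hxe, hxf])
      · rwa [Finset.mem_singleton.mp h] at ha'
    have hy2 : y ∈ ({f, g} : Finset α) := by
      obtain ⟨a, ha, ha'⟩ := hmem _ hs₂
      rw [hseq] at ha
      rw [hs₂eq] at ha'
      rcases Finset.mem_insert.mp ha with rfl | h
      · exact absurd ha' (by simp [hxf, hxg])
      · rwa [Finset.mem_singleton.mp h] at ha'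
    have hy3 : y ∈ ({e, g} : Finset α) := by
      obtain ⟨a, ha, ha'⟩ := hmem _ hs₃
      rw [hseq] at ha
      rw [hs₃eq] at ha'
      rcases Finset.mem_insert.mp ha with rfl | h
      · exact absurd ha' (by simp [hxe, hxg])
      · rwa [Finset.mem_singleton.mp h] at ha'
    have hyf : y = f := by
      rcases Finset.mem_insert.mp hy1 with rfl | h1
      · rcases Finset.mem_insert.mp hy2 with h2' | h2'
        · exact h2'
        · exact absurd (Finset.mem_singleton.mp h2') hge.symm
      · exact Finset.mem_singleton.mp h1
    subst hyf
    rcases Finset.mem_insert.mp hy3 with h3 | h3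
    · exact hef h3.symm
    · exact hgf (Finset.mem_singleton.mp h3).symm
  have hsub : F ⊆ ({e, f, g} : Finset α).powersetCard 2 := by
    intro s hs
    rw [Finset.mem_powersetCard]
    exact ⟨key s hs, h2 s hs⟩
  calc F.card ≤ _ := Finset.card_le_card hsub
    _ ≤ 3 := by
        rw [Finset.card_powersetCard]
        have h3 : ({e, f, g} : Finset α).card ≤ 3 := Finset.card_le_three ..
        interval_cases h : ({e, f, g} : Finset α).card <;> simp

end Helpers


lemma deg_ineq (d : ℕ) : 3 * d ≤ 4 + 2 * d.choose 2 := by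
  rcases d with _ | _ | m
  · simp
  · simp
  · have h : (m + 2).choose 2 = (m+2)*(m+1)/2 := by
      rw [Nat.choose_two_right]
      congr 1
    have h2 : 2 * ((m+2)*(m+1)/2) = (m+2)*(m+1) := by
      rw [Nat.two_mul_div_two_of_even]
      have := Nat.even_mul_succ_self (m+1)
      simpa [Nat.mul_comm] using this
    rw [h, h2]
    nlinarith

open Finset in
lemma card_filter_mem_sym2 {V : Type*} [Fintype V] [DecidableEq V] (e : Sym2 V)
    (h : ¬ e.IsDiag) : (Finset.univ.filter (fun v => v ∈ e)).card = 2 := by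
  induction e with | _ a b =>
  have hab : a ≠ b := by simpa using h
  have hset : Finset.univ.filter (fun v => v ∈ s(a, b)) = {a, b} := by
    ext v; simp [Sym2.mem_iff]
  rw [hset, Finset.card_insert_of_notMem (by simp [hab]), Finset.card_singleton]

open Finset in
lemma pathKneser_lower {V : Type*} [Fintype V] [DecidableEq V] [Nonempty V]
    (G : SimpleGraph V) [DecidableRel G.Adj] (k : ℕ)
    (hcol : (pathKneser G).Colorable k) :
    G.edgeFinset.card ≤ k + 2 * Fintype.card V / 3 := by
  classical
  haveI : Nonempty (Sym2 V) := Nonempty.map (fun v => s(v, v)) ‹Nonempty V›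
  obtain ⟨C⟩ := hcol
  set Pa := {s : Finset (Sym2 V) // IsP2 G s}
  -- star colors
  set star : Fin k → Prop := fun i => ∃ e, ∀ s : Pa, C s = i → e ∈ s.val with hstar
  set center : Fin k → Sym2 V := fun i =>
    if h : star i then h.choose else Classical.arbitrary _ with hcenterdef
  have hcenter : ∀ i : Fin k, star i → ∀ s : Pa, C s = i → center i ∈ s.val := by
    intro i hi s hs
    rw [hcenterdef]
    simp only [dif_pos hi]
    exact hi.choose_spec s hs
  set StarC : Finset (Fin k) := Finset.univ.filter star with hStarC
  set S : Finset (Sym2 V) := (StarC.image center) ∩ G.edgeFinset with hS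
  set U : Finset (Sym2 V) := G.edgeFinset \ S with hU
  set t : ℕ := (Finset.univ.filter (fun i => ¬ star i)).card with ht
  have hkt : StarC.card + t = k := by
    rw [hStarC, ht, Finset.card_filter_add_card_filter_not]
    simp
  set PU : Finset Pa := Finset.univ.filter (fun s => s.val ⊆ U) with hPU
  -- Step A
  have stepA : ∀ s ∈ PU, ¬ star (C s) := by
    intro s hs hst
    have he : center (C s) ∈ s.val := hcenter _ hst s rfl
    have hsU : s.val ⊆ U := (Finset.mem_filter.mp hs).2
    have heU : center (C s) ∈ U := hsU he
    have heS : center (C s) ∈ S := by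
      rw [hS]
      refine Finset.mem_inter.mpr ⟨Finset.mem_image.mpr ⟨C s, ?_, rfl⟩, ?_⟩
      · rw [hStarC]; simp [hst]
      · exact Finset.mem_sdiff.mp heU |>.1
    exact (Finset.mem_sdiff.mp heU).2 heS
  -- Step B
  have stepB : ∀ i : Fin k, ¬ star i →
      (Finset.univ.filter (fun s : Pa => C s = i)).card ≤ 3 := by
    intro i hi
    set F := (Finset.univ.filter (fun s : Pa => C s = i)).image Subtype.val with hF
    have hcardF : (Finset.univ.filter (fun s : Pa => C s = i)).card = F.card := by
      rw [hF, Finset.card_image_of_injective _ Subtype.val_injective]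
    rw [hcardF]
    apply card_le_three_of_no_common
    · intro s hs
      obtain ⟨s', _, rfl⟩ := Finset.mem_image.mp hs
      exact s'.2.2.1
    · intro s hs u hu hd
      obtain ⟨s', hs', rfl⟩ := Finset.mem_image.mp hs
      obtain ⟨u', hu', rfl⟩ := Finset.mem_image.mp hu
      have hcs : C s' = i := (Finset.mem_filter.mp hs').2
      have hcu : C u' = i := (Finset.mem_filter.mp hu').2
      by_cases hne : s' = u'
      · subst hne
        have h0 : (s' : Finset (Sym2 V)) = ∅ := (disjoint_self_iff_empty _).mp hd
        have h2' := s'.2.2.1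
        rw [show s'.val = (s' : Finset (Sym2 V)) from rfl, h0] at h2'
        simp at h2'
      · exact C.valid ⟨hne, hd⟩ (hcs.trans hcu.symm)
    · rintro ⟨e, he⟩
      exact hi ⟨e, fun s hs => he s.val (Finset.mem_image.mpr ⟨s, by simp [hs], rfl⟩)⟩
  -- Step C
  have stepC : PU.card ≤ 3 * t := by
    calc PU.card ≤ 3 * (PU.image C).card := by
          apply Finset.card_le_mul_card_image
          intro i hi
          obtain ⟨s, hs, rfl⟩ := Finset.mem_image.mp hi
          calc (PU.filter (fun u => C u = C s)).card
              ≤ (Finset.univ.filter (fun u : Pa => C u = C s)).card :=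
                Finset.card_le_card (by intro u hu; simp [(Finset.mem_filter.mp hu).2])
            _ ≤ 3 := stepB _ (stepA s hs)
      _ ≤ 3 * t := by
          apply Nat.mul_le_mul_left
          rw [ht]
          apply Finset.card_le_card
          intro i hi
          obtain ⟨s, hs, rfl⟩ := Finset.mem_image.mp hi
          simp [stepA s hs]
  -- degrees
  set d : V → ℕ := fun v => (U.filter (fun e => v ∈ e)).card with hd
  -- Step D
  set W : Finset (Finset (Sym2 V)) :=
    Finset.univ.biUnion (fun v => (U.filter (fun e => v ∈ e)).powersetCard 2) with hW
  have hWdisj : ∀ v ∈ (Finset.univ : Finset V), ∀ w ∈ (Finset.univ : Finset V), v ≠ w →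
      Disjoint ((U.filter (fun e => v ∈ e)).powersetCard 2)
        ((U.filter (fun e => w ∈ e)).powersetCard 2) := by
    intro v _ w _ hvw
    rw [Finset.disjoint_left]
    intro p hpv hpw
    obtain ⟨hpv1, hpv2⟩ := Finset.mem_powersetCard.mp hpv
    obtain ⟨hpw1, _⟩ := Finset.mem_powersetCard.mp hpw
    obtain ⟨e, f, hef, rfl⟩ := Finset.card_eq_two.mp hpv2
    have h1 := Finset.mem_filter.mp (hpv1 (Finset.mem_insert_self e {f}))
    have h2 := Finset.mem_filter.mp (hpv1 (by simp : f ∈ ({e, f} : Finset (Sym2 V))))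
    have h3 := Finset.mem_filter.mp (hpw1 (Finset.mem_insert_self e {f}))
    have h4 := Finset.mem_filter.mp (hpw1 (by simp : f ∈ ({e, f} : Finset (Sym2 V))))
    have he : e = s(v, w) := (Sym2.mem_and_mem_iff hvw).mp ⟨h1.2, h3.2⟩
    have hf : f = s(v, w) := (Sym2.mem_and_mem_iff hvw).mp ⟨h2.2, h4.2⟩
    exact hef (he.trans hf.symm)
  have hWcard : W.card = ∑ v, (d v).choose 2 := by
    rw [hW, Finset.card_biUnion hWdisj]
    exact Finset.sum_congr rfl fun v _ => by rw [Finset.card_powersetCard]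
  have hWPU : W.card ≤ PU.card := by
    have hsub : W ⊆ PU.image Subtype.val := by
      intro p hp
      rw [hW, Finset.mem_biUnion] at hp
      obtain ⟨v, _, hp⟩ := hp
      obtain ⟨hp1, hp2⟩ := Finset.mem_powersetCard.mp hp
      have hpU : p ⊆ U := hp1.trans (Finset.filter_subset _ _)
      have hP2 : IsP2 G p := by
        refine ⟨?_, hp2, v, fun e he => (Finset.mem_filter.mp (hp1 he)).2⟩
        intro e he
        have : e ∈ U := hpU (by simpa using he)
        have : e ∈ G.edgeFinset := (Finset.mem_sdiff.mp this).1
        rwa [SimpleGraph.mem_edgeFinset] at this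
      refine Finset.mem_image.mpr ⟨⟨p, hP2⟩, ?_, rfl⟩
      rw [hPU]; simp [hpU]
    calc W.card ≤ (PU.image Subtype.val).card := Finset.card_le_card hsub
      _ ≤ PU.card := Finset.card_image_le
  have hchoose : ∑ v, (d v).choose 2 ≤ 3 * t := by
    rw [← hWcard]; exact hWPU.trans stepC
  -- Step E : handshake
  have stepE : ∑ v, d v = 2 * U.card := by
    have h1 : ∀ v : V, d v = ∑ e ∈ U, if v ∈ e then 1 else 0 := fun v =>
      Finset.card_filter _ _
    calc ∑ v, d v = ∑ v, ∑ e ∈ U, if v ∈ e then 1 else 0 :=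
          Finset.sum_congr rfl fun v _ => h1 v
      _ = ∑ e ∈ U, ∑ v, if v ∈ e then 1 else 0 := Finset.sum_comm
      _ = ∑ e ∈ U, (2 : ℕ) := by
          apply Finset.sum_congr rfl
          intro e he
          have heE : e ∈ G.edgeFinset := (Finset.mem_sdiff.mp he).1
          have : ¬ e.IsDiag :=
            G.not_isDiag_of_mem_edgeSet (SimpleGraph.mem_edgeFinset.mp heE)
          rw [← Finset.card_filter]
          exact card_filter_mem_sym2 e this
      _ = 2 * U.card := by rw [Finset.sum_const, smul_eq_mul, mul_comm]
  -- combine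
  have h6 : 6 * U.card ≤ 4 * Fintype.card V + 6 * t := by
    calc 6 * U.card = 3 * ∑ v, d v := by rw [stepE]; ring
      _ = ∑ v, 3 * d v := Finset.mul_sum _ _ _
      _ ≤ ∑ v, (4 + 2 * (d v).choose 2) := Finset.sum_le_sum fun v _ => deg_ineq (d v)
      _ = 4 * Fintype.card V + 2 * ∑ v, (d v).choose 2 := by
          rw [Finset.sum_add_distrib, Finset.sum_const, ← Finset.mul_sum,
            smul_eq_mul, Finset.card_univ]
          ring
      _ ≤ 4 * Fintype.card V + 2 * (3 * t) := by
          have := Nat.mul_le_mul_left 2 hchoose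
          omega
      _ = 4 * Fintype.card V + 6 * t := by ring
  -- final counting
  have hSsub : S ⊆ G.edgeFinset := by rw [hS]; exact Finset.inter_subset_right
  have hUS : U.card + S.card = G.edgeFinset.card := by
    rw [hU]; exact Finset.card_sdiff_add_card_eq_card hSsub
  have hScard : S.card ≤ StarC.card := by
    calc S.card ≤ (StarC.image center).card :=
          Finset.card_le_card (by rw [hS]; exact Finset.inter_subset_left)
      _ ≤ StarC.card := Finset.card_image_le
  omega

open Finset in
lemma pathKneser_upper {V : Type*} [Fintype V] [DecidableEq V]
    (G : SimpleGraph V) [DecidableRel G.Adj]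
    (P : Finset (Finset V)) (A B : Finset V)
    (hA : A ∈ P) (hB : B ∈ P) (hAB : A ≠ B)
    (hdisj : ∀ C ∈ P, ∀ D ∈ P, C ≠ D → Disjoint C D)
    (hcover : ∀ v : V, ∃ C ∈ P, v ∈ C)
    (htri : ∀ C ∈ P, C ≠ A → C ≠ B → C.card = 3 ∧ G.IsClique ↑C)
    (hA' : (A.card = 2 ∨ A.card = 3) ∧ G.IsClique ↑A)
    (hB' : (B.card = 2 ∨ B.card = 3) ∧ G.IsClique ↑B) :
    ∃ m : ℕ, (pathKneser G).Colorable m ∧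
      m + 2 * Fintype.card V / 3 = G.edgeFinset.card := by
  classical
  set Lp : Finset V → Finset (Sym2 V) :=
    fun C => G.edgeFinset.filter (fun e => ∀ v ∈ e, v ∈ C) with hLp
  set L : Finset (Sym2 V) := P.biUnion Lp with hL
  set P3 : Finset (Finset V) := P.filter (fun C => C.card = 3) with hP3
  set Y : Finset (Sym2 V ⊕ Finset V) :=
    (G.edgeFinset \ L).image Sum.inl ∪ P3.image Sum.inr with hY
  have hclique : ∀ C ∈ P, G.IsClique ↑C := by
    intro C hC
    by_cases h1 : C = A
    · subst h1; exact hA'.2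
    by_cases h2 : C = B
    · subst h2; exact hB'.2
    exact (htri C hC h1 h2).2
  have hcards : ∀ C ∈ P, C.card = 2 ∨ C.card = 3 := by
    intro C hC
    by_cases h1 : C = A
    · subst h1; exact hA'.1
    by_cases h2 : C = B
    · subst h2; exact hB'.1
    exact Or.inr (htri C hC h1 h2).1
  have hLpmem : ∀ (C : Finset V) (a b : V),
      s(a, b) ∈ Lp C ↔ G.Adj a b ∧ a ∈ C ∧ b ∈ C := by
    intro C a b
    rw [hLp]
    simp [SimpleGraph.mem_edgeFinset, and_assoc]
  -- exact card of Lp on parts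
  have hLpcard : ∀ C ∈ P, (C.card = 2 → (Lp C).card = 1) ∧
      (C.card = 3 → (Lp C).card = 3) := by
    intro C hC
    constructor
    · intro h2
      obtain ⟨a, b, hab, rfl⟩ := Finset.card_eq_two.mp h2
      have hadj : G.Adj a b := hclique _ hC (by simp) (by simp) hab
      have : Lp {a, b} = {s(a, b)} := by
        ext e
        induction e with | _ x y =>
        rw [hLpmem]
        simp only [Finset.mem_insert, Finset.mem_singleton]
        constructor
        · rintro ⟨hxy, (rfl | rfl), (rfl | rfl)⟩
          · exact absurd rfl hxy.ne
          · rfl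
          · exact Sym2.eq_swap
          · exact absurd rfl hxy.ne
        · intro h
          rw [Sym2.eq_iff] at h
          rcases h with ⟨rfl, rfl⟩ | ⟨rfl, rfl⟩
          · exact ⟨hadj, Or.inl rfl, Or.inr rfl⟩
          · exact ⟨hadj.symm, Or.inr rfl, Or.inl rfl⟩
      rw [this, Finset.card_singleton]
    · intro h3
      obtain ⟨a, b, c, hab, hac, hbc, rfl⟩ := Finset.card_eq_three.mp h3
      have hadjab : G.Adj a b := hclique _ hC (by simp) (by simp) hab
      have hadjac : G.Adj a c := hclique _ hC (by simp) (by simp) hac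
      have hadjbc : G.Adj b c := hclique _ hC (by simp) (by simp) hbc
      have : Lp {a, b, c} = {s(a, b), s(a, c), s(b, c)} := by
        ext e
        induction e with | _ x y =>
        rw [hLpmem]
        simp only [Finset.mem_insert, Finset.mem_singleton]
        constructor
        · rintro ⟨hxy, (rfl | rfl | rfl), (rfl | rfl | rfl)⟩ <;>
            first
              | exact absurd rfl hxy.ne
              | simp [Sym2.eq_iff]
        · intro h
          rcases h with h | h | h <;> rw [Sym2.eq_iff] at h <;>
            rcases h with ⟨rfl, rfl⟩ | ⟨rfl, rfl⟩
          · exact ⟨hadjab, by simp⟩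
          · exact ⟨hadjab.symm, by simp⟩
          · exact ⟨hadjac, by simp⟩
          · exact ⟨hadjac.symm, by simp⟩
          · exact ⟨hadjbc, by simp⟩
          · exact ⟨hadjbc.symm, by simp⟩
      rw [this]
      rw [Finset.card_insert_of_notMem, Finset.card_insert_of_notMem,
        Finset.card_singleton]
      · simp only [Finset.mem_singleton, Sym2.eq_iff]
        tauto
      · simp only [Finset.mem_insert, Finset.mem_singleton, Sym2.eq_iff]
        tauto
  -- the coloring function
  set col : {s : Finset (Sym2 V) // IsP2 G s} → Sym2 V ⊕ Finset V := fun s =>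
    if h : (s.val \ L).Nonempty then Sum.inl h.choose
    else Sum.inr (hcover s.2.2.2.choose).choose with hcoldef
  have hcolspec : ∀ s : {s : Finset (Sym2 V) // IsP2 G s},
      (∃ e, col s = Sum.inl e ∧ e ∈ s.val ∧ e ∈ G.edgeFinset \ L) ∨
      (∃ C ∈ P, col s = Sum.inr C ∧ C.card = 3 ∧ s.val ⊆ Lp C) := by
    intro s
    by_cases h : (s.val \ L).Nonempty
    · left
      refine ⟨h.choose, by rw [hcoldef]; simp [dif_pos h], ?_, ?_⟩
      · exact (Finset.mem_sdiff.mp h.choose_spec).1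
      · have h1 := (Finset.mem_sdiff.mp h.choose_spec).1
        have h2 := (Finset.mem_sdiff.mp h.choose_spec).2
        refine Finset.mem_sdiff.mpr ⟨?_, h2⟩
        rw [SimpleGraph.mem_edgeFinset]
        exact s.2.1 h1
    · right
      have hvspec : ∀ e ∈ s.val, s.2.2.2.choose ∈ e := s.2.2.2.choose_spec
      have hCsP : (hcover s.2.2.2.choose).choose ∈ P :=
        (hcover s.2.2.2.choose).choose_spec.1
      have hvCs : s.2.2.2.choose ∈ (hcover s.2.2.2.choose).choose :=
        (hcover s.2.2.2.choose).choose_spec.2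
      have hsubL : s.val ⊆ L := by
        rw [← Finset.sdiff_eq_empty_iff_subset]
        exact Finset.not_nonempty_iff_eq_empty.mp h
      have hsub : s.val ⊆ Lp (hcover s.2.2.2.choose).choose := by
        intro e he
        have heL := hsubL he
        rw [hL, Finset.mem_biUnion] at heL
        obtain ⟨D, hD, heD⟩ := heL
        have hvD : s.2.2.2.choose ∈ D := by
          have := (Finset.mem_filter.mp heD).2
          exact this _ (hvspec e he)
        have hDC : D = (hcover s.2.2.2.choose).choose := by
          by_contra hne
          exact Finset.disjoint_left.mp (hdisj D hD _ hCsP hne) hvD hvCs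
        rwa [hDC] at heD
      have hcard3 : ((hcover s.2.2.2.choose).choose).card = 3 := by
        rcases hcards _ hCsP with h2 | h3
        · exfalso
          have hle : (2 : ℕ) ≤ (Lp (hcover s.2.2.2.choose).choose).card := by
            calc (2 : ℕ) = s.val.card := s.2.2.1.symm
              _ ≤ _ := Finset.card_le_card hsub
          have := (hLpcard _ hCsP).1 h2
          omega
        · exact h3
      exact ⟨_, hCsP, by rw [hcoldef]; simp [dif_neg h], hcard3, hsub⟩
  have hmem : ∀ s, col s ∈ Y := by
    intro s
    rcases hcolspec s with ⟨e, hce, _, heEL⟩ | ⟨C, hCP, hcC, hC3, _⟩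
    · rw [hce, hY]
      exact Finset.mem_union_left _ (Finset.mem_image.mpr ⟨e, heEL, rfl⟩)
    · rw [hcC, hY]
      refine Finset.mem_union_right _ (Finset.mem_image.mpr ⟨C, ?_, rfl⟩)
      rw [hP3]; exact Finset.mem_filter.mpr ⟨hCP, hC3⟩
  have hvalid : ∀ a b, (pathKneser G).Adj a b → col a ≠ col b := by
    intro a b hadj heq
    obtain ⟨hne, hdisjab⟩ := hadj
    rcases hcolspec a with ⟨e, hae, hea, _⟩ | ⟨Ca, hCaP, hac, hCa3, hsa⟩ <;>
      rcases hcolspec b with ⟨f, hbf, hfb, _⟩ | ⟨Cb, hCbP, hbc, hCb3, hsb⟩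
    · rw [hae, hbf] at heq
      have : e = f := Sum.inl.inj heq
      subst this
      exact Finset.disjoint_left.mp hdisjab hea hfb
    · rw [hae, hbc] at heq; exact absurd heq (by simp)
    · rw [hac, hbf] at heq; exact absurd heq (by simp)
    · rw [hac, hbc] at heq
      have hCC : Ca = Cb := Sum.inr.inj heq
      subst hCC
      have hcard4 : (a.val ∪ b.val).card = 4 := by
        rw [Finset.card_union_of_disjoint hdisjab, a.2.2.1, b.2.2.1]
      have hsub : a.val ∪ b.val ⊆ Lp Ca := Finset.union_subset hsa hsb
      have hle : (4 : ℕ) ≤ (Lp Ca).card := hcard4 ▸ Finset.card_le_card hsub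
      have := (hLpcard _ hCaP).2 hCa3
      omega
  -- build the coloring
  have hcolorable : (pathKneser G).Colorable Y.card := by
    have C : (pathKneser G).Coloring {y // y ∈ Y} :=
      SimpleGraph.Coloring.mk (fun s => ⟨col s, hmem s⟩)
        (fun {a b} hadj h => hvalid a b hadj (congrArg Subtype.val h))
    have := C.colorable
    rwa [Fintype.card_coe] at this
  refine ⟨Y.card, hcolorable, ?_⟩
  -- cardinality computation
  have hLsub : L ⊆ G.edgeFinset := by
    intro e he
    rw [hL, Finset.mem_biUnion] at he
    obtain ⟨C, _, heC⟩ := he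
    exact Finset.mem_filter.mp heC |>.1
  have hYcard : Y.card = (G.edgeFinset.card - L.card) + P3.card := by
    rw [hY, Finset.card_union_of_disjoint, Finset.card_image_of_injective _ Sum.inl_injective,
      Finset.card_image_of_injective _ Sum.inr_injective, Finset.card_sdiff_of_subset hLsub]
    rw [Finset.disjoint_left]
    rintro x hx hx'
    obtain ⟨e, _, rfl⟩ := Finset.mem_image.mp hx
    obtain ⟨C, _, hC⟩ := Finset.mem_image.mp hx'
    exact absurd hC (by simp)
  have hLpdisj : ∀ C ∈ P, ∀ D ∈ P, C ≠ D → Disjoint (Lp C) (Lp D) := by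
    intro C hC D hD hne
    rw [Finset.disjoint_left]
    intro e heC heD
    have ha : e.out.1 ∈ e := Sym2.out_fst_mem e
    have haC : e.out.1 ∈ C := (Finset.mem_filter.mp heC).2 _ ha
    have haD : e.out.1 ∈ D := (Finset.mem_filter.mp heD).2 _ ha
    exact Finset.disjoint_left.mp (hdisj C hC D hD hne) haC haD
  have hLcard : L.card = ∑ C ∈ P, (Lp C).card := Finset.card_biUnion hLpdisj
  -- sums over parts
  set Dn : ℕ := (P.filter (fun C => ¬ C.card = 3)).card with hDn
  have hsumL : ∑ C ∈ P, (Lp C).card = 3 * P3.card + Dn := by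
    rw [← Finset.sum_filter_add_sum_filter_not P (fun C => C.card = 3)]
    congr 1
    · rw [Finset.sum_congr rfl (fun C hC => (hLpcard C (Finset.mem_filter.mp hC).1).2
        (Finset.mem_filter.mp hC).2), Finset.sum_const, smul_eq_mul, hP3, mul_comm]
    · rw [Finset.sum_congr rfl (fun C hC => (hLpcard C (Finset.mem_filter.mp hC).1).1
        (by rcases hcards C (Finset.mem_filter.mp hC).1 with h | h
            · exact h
            · exact absurd h (Finset.mem_filter.mp hC).2)),
        Finset.sum_const, smul_eq_mul, mul_one]
  have huniv : (Finset.univ : Finset V) = P.biUnion id := by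
    ext v
    simp only [Finset.mem_univ, true_iff, Finset.mem_biUnion, id]
    exact hcover v
  have hncard : Fintype.card V = ∑ C ∈ P, C.card := by
    rw [← Finset.card_univ, huniv]
    exact Finset.card_biUnion (fun C hC D hD hne => hdisj C hC D hD hne)
  have hsumn : ∑ C ∈ P, C.card = 3 * P3.card + 2 * Dn := by
    rw [← Finset.sum_filter_add_sum_filter_not P (fun C => C.card = 3)]
    congr 1
    · rw [Finset.sum_congr rfl (fun C hC => (Finset.mem_filter.mp hC).2),
        Finset.sum_const, smul_eq_mul, hP3, mul_comm]
    · rw [Finset.sum_congr rfl (fun C hC =>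
        (by rcases hcards C (Finset.mem_filter.mp hC).1 with h | h
            · exact h
            · exact absurd h (Finset.mem_filter.mp hC).2 : C.card = 2)),
        Finset.sum_const, smul_eq_mul, mul_comm]
  have hDle : Dn ≤ 2 := by
    have hsub : P.filter (fun C => ¬ C.card = 3) ⊆ {A, B} := by
      intro C hC
      obtain ⟨hCP, hC3⟩ := Finset.mem_filter.mp hC
      by_contra hC'
      simp only [Finset.mem_insert, Finset.mem_singleton, not_or] at hC'
      exact hC3 (htri C hCP hC'.1 hC'.2).1
    calc Dn ≤ ({A, B} : Finset (Finset V)).card := Finset.card_le_card hsub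
      _ ≤ 2 := Finset.card_insert_le _ _ |>.trans (by simp)
  have hLE : L.card ≤ G.edgeFinset.card := Finset.card_le_card hLsub
  omega

/-- If the vertex set of `G` partitions into parts spanning cliques of `G`,
all triangles except the last two parts which are each a `K₂` or a `K₃`, then
χ(KG(G, P₂)) = |E(G)| − ⌊2n/3⌋. -/
theorem chromatic_pathKneser_of_triangle_factor {V : Type*} [Fintype V] [DecidableEq V]
    (G : SimpleGraph V) [DecidableRel G.Adj]
    (P : Finset (Finset V)) (A B : Finset V)
    (hA : A ∈ P) (hB : B ∈ P) (hAB : A ≠ B)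
    (hdisj : ∀ C ∈ P, ∀ D ∈ P, C ≠ D → Disjoint C D)
    (hcover : ∀ v : V, ∃ C ∈ P, v ∈ C)
    (htri : ∀ C ∈ P, C ≠ A → C ≠ B → C.card = 3 ∧ G.IsClique ↑C)
    (hA' : (A.card = 2 ∨ A.card = 3) ∧ G.IsClique ↑A)
    (hB' : (B.card = 2 ∨ B.card = 3) ∧ G.IsClique ↑B) :
    (pathKneser G).chromaticNumber + ((2 * Fintype.card V / 3 : ℕ) : ℕ∞) =
      (G.edgeFinset.card : ℕ∞) := by
  classical
  haveI : Nonempty V := by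
    have hpos : 0 < A.card := by rcases hA'.1 with h | h <;> omega
    obtain ⟨a, ha⟩ := Finset.card_pos.mp hpos
    exact ⟨a⟩
  obtain ⟨m, hm, hmeq⟩ := pathKneser_upper G P A B hA hB hAB hdisj hcover htri hA' hB'
  have hup : (pathKneser G).chromaticNumber ≤ (m : ℕ∞) := hm.chromaticNumber_le
  have hlow : (m : ℕ∞) ≤ (pathKneser G).chromaticNumber := by
    rw [SimpleGraph.chromaticNumber]
    refine le_iInf₂ fun j hj => ?_
    have hj' : (pathKneser G).Colorable j := hj
    have hle := pathKneser_lower G j hj'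
    exact_mod_cast (by omega : m ≤ j)
  have hchrom : (pathKneser G).chromaticNumber = (m : ℕ∞) := le_antisymm hup hlow
  rw [hchrom, ← Nat.cast_add, hmeq]
end
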